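/- For the log-logistic distribution with α > 0 and shape parameter β ≤ 1 with β > 0, the hazard function h_{α,β}(t) = β t^{β-1}/(t^β + α^β) is monotonically nonincreasing on (0, ∞). -/
import Mathlib

open Real Set

/-- For `0 < β ≤ 1`, the log-logistic hazard `h(t) = β t^(β-1)/(t^β + α^β)` is
monotonically nonincreasing on `(0, ∞)`. -/
theorem loglogistic_hazard_antitone (α β : ℝ) (hα : 0 < α) (hβ : 0 < β) (hβ1 : β ≤ 1) :
    AntitoneOn (fun t : ℝ => β * t ^ (β - 1) / (t ^ β + α ^ β)) (Set.Ioi 0) := by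
  intro x hx y hy hxy
  simp only [mem_Ioi] at hx hy
  have hnum : β * y ^ (β - 1) ≤ β * x ^ (β - 1) :=
    mul_le_mul_of_nonneg_left (Real.rpow_le_rpow_of_nonpos hx hxy (by linarith)) hβ.le
  have hden : x ^ β + α ^ β ≤ y ^ β + α ^ β := by
    have := Real.rpow_le_rpow hx.le hxy hβ.le
    linarith
  have hdpos : (0:ℝ) < x ^ β + α ^ β := by positivity
  exact div_le_div₀ (by positivity) hnum hdpos hden
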